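/- Let a_1 < a_2 < ... < a_n be positive integers with a_i ≤ 2i - 1 for all i, corresponding to a Young diagram Y(a) whose (n+1-i)-th row from the top has length a_i - i. Then 1/H_{Y(a)} equals the n×n determinant with (i,j) entry 1/(a_i - j)!, where 1/m! is interpreted as 0 when m < 0. -/

import Mathlib

/-- The hook length of the box `u` in the cell set `c`. -/
def hookLen (c : Finset (ℕ × ℕ)) (u : ℕ × ℕ) : ℕ :=
  (c.filter fun v => v.1 = u.1 ∧ u.2 ≤ v.2).card +
  (c.filter fun v => v.2 = u.2 ∧ u.1 < v.1).card

/-- The product of all hook lengths of a cell set. -/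
def hookProd (c : Finset (ℕ × ℕ)) : ℕ := ∏ u ∈ c, hookLen c u

/-- Totalization of a sequence `a : Fin n → ℕ` to `ℕ → ℕ` (value `0` out of range). -/
def extSeq (n : ℕ) (a : Fin n → ℕ) : ℕ → ℕ := fun m => if h : m < n then a ⟨m, h⟩ else 0

/-- The Young diagram `Y(a)` associated to a sequence `a₁ < ⋯ < aₙ` (0-indexed here):
its `(n+1-i)`-th row from the top has `aᵢ - i` boxes. Rows and columns are 0-indexed. -/
def cellsOf (n : ℕ) (a : Fin n → ℕ) : Finset (ℕ × ℕ) :=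
  ((Finset.range n) ×ˢ (Finset.range (2 * n))).filter fun u =>
    u.2 < extSeq n a (n - 1 - u.1) - (n - u.1)

open Finset

lemma mem_cellsOf {n : ℕ} {a : Fin n → ℕ} (h2 : ∀ i : Fin n, a i ≤ 2 * (i : ℕ) + 1)
    {u : ℕ × ℕ} :
    u ∈ cellsOf n a ↔ u.1 < n ∧ u.2 + (n - u.1) < extSeq n a (n - 1 - u.1) := by
  unfold cellsOf
  simp only [Finset.mem_filter, Finset.mem_product, Finset.mem_range]
  constructor
  · rintro ⟨⟨h1', _⟩, h3⟩; exact ⟨h1', by omega⟩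
  · rintro ⟨hu1, hc⟩
    have hn : n - 1 - u.1 < n := by omega
    have hb : a ⟨n - 1 - u.1, hn⟩ ≤ 2 * (n - 1 - u.1) + 1 := h2 ⟨n - 1 - u.1, hn⟩
    have he : extSeq n a (n - 1 - u.1) = a ⟨n - 1 - u.1, hn⟩ := dif_pos hn
    exact ⟨⟨hu1, by omega⟩, by omega⟩

/-- gap lemma for strict mono sequences on Fin -/
lemma strictMono_gap {m : ℕ} {f : Fin m → ℕ} (hf : StrictMono f) :
    ∀ (k : ℕ) (i j : Fin m), (j : ℕ) = (i : ℕ) + k → f i + k ≤ f j := by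
  intro k
  induction k with
  | zero => intro i j h; have : i = j := Fin.ext (by omega); subst this; omega
  | succ k ih =>
    intro i j h
    have hj' : (i : ℕ) + k < m := by omega
    have h1 := ih i ⟨(i : ℕ) + k, hj'⟩ rfl
    have h2 : (⟨(i : ℕ) + k, hj'⟩ : Fin m) < j := by
      rw [Fin.lt_def]; simp; omega
    have := hf h2
    omega
lemma extSeq_eq {n : ℕ} (a : Fin n → ℕ) (k : ℕ) (h : k < n) : extSeq n a k = a ⟨k, h⟩ :=
  dif_pos h

lemma h2' {m : ℕ} {a : Fin (m+1) → ℕ} (h2 : ∀ i : Fin (m+1), a i ≤ 2 * (i : ℕ) + 1) :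
    ∀ i : Fin m, a i.castSucc ≤ 2 * (i : ℕ) + 1 := fun i => by
  simpa using h2 i.castSucc

lemma shift_mem {m : ℕ} {a : Fin (m+1) → ℕ} (h2 : ∀ i : Fin (m+1), a i ≤ 2 * (i : ℕ) + 1)
    (r c : ℕ) :
    (r + 1, c) ∈ cellsOf (m+1) a ↔ (r, c) ∈ cellsOf m (fun i => a i.castSucc) := by
  rw [mem_cellsOf h2, mem_cellsOf (h2' h2)]
  simp only
  have hext : ∀ k, k < m → extSeq (m+1) a k = extSeq m (fun i => a i.castSucc) k := by
    intro k hk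
    rw [extSeq_eq a k (by omega), extSeq_eq (fun i : Fin m => a i.castSucc) k hk]
    exact congrArg a (Fin.ext rfl)
  constructor
  · rintro ⟨h, hc⟩
    have hr : r < m := by omega
    refine ⟨hr, ?_⟩
    have e1 : m + 1 - 1 - (r + 1) = m - 1 - r := by omega
    rw [e1, hext _ (by omega)] at hc
    have e2 : m + 1 - (r + 1) = m - r := by omega
    rw [e2] at hc
    exact hc
  · rintro ⟨h, hc⟩
    refine ⟨by omega, ?_⟩
    have e1 : m + 1 - 1 - (r + 1) = m - 1 - r := by omega
    rw [e1, hext _ (by omega)]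
    have e2 : m + 1 - (r + 1) = m - r := by omega
    rw [e2]
    exact hc



lemma hookLen_shift {m : ℕ} {a : Fin (m+1) → ℕ} (h2 : ∀ i : Fin (m+1), a i ≤ 2 * (i : ℕ) + 1)
    (r c : ℕ) :
    hookLen (cellsOf (m+1) a) (r + 1, c) = hookLen (cellsOf m (fun i => a i.castSucc)) (r, c) := by
  unfold hookLen
  congr 1
  · refine Finset.card_bij' (fun v _ => ((v.1 - 1 : ℕ), v.2))
      (fun w _ => ((w.1 + 1 : ℕ), w.2)) ?hi ?hj ?left ?right
    case hi =>
      rintro ⟨v1, v2⟩ hv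
      simp only [mem_filter] at hv ⊢
      obtain ⟨hvc, hv1, hv2⟩ := hv
      subst hv1
      rw [shift_mem h2] at hvc
      exact ⟨hvc, by simp, hv2⟩
    case hj =>
      rintro ⟨w1, w2⟩ hw
      simp only [mem_filter] at hw ⊢
      obtain ⟨hwc, hw1, hw2⟩ := hw
      subst hw1
      rw [← shift_mem h2] at hwc
      exact ⟨hwc, rfl, hw2⟩
    case left =>
      rintro ⟨v1, v2⟩ hv
      simp only [mem_filter] at hv
      obtain ⟨-, hv1, -⟩ := hv
      subst hv1
      rfl
    case right =>
      rintro ⟨w1, w2⟩ hw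
      rfl
  · refine Finset.card_bij' (fun v _ => ((v.1 - 1 : ℕ), v.2))
      (fun w _ => ((w.1 + 1 : ℕ), w.2)) ?hi ?hj ?left ?right
    case hi =>
      rintro ⟨v1, v2⟩ hv
      simp only [mem_filter] at hv ⊢
      obtain ⟨hvc, hv1, hv2⟩ := hv
      have hv1' : v1 = (v1 - 1) + 1 := by omega
      rw [hv1'] at hvc
      rw [shift_mem h2] at hvc
      exact ⟨hvc, hv1, by omega⟩
    case hj =>
      rintro ⟨w1, w2⟩ hw
      simp only [mem_filter] at hw ⊢
      obtain ⟨hwc, hw1, hw2⟩ := hw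
      rw [← shift_mem h2 w1 w2] at hwc
      exact ⟨hwc, hw1, by omega⟩
    case left =>
      rintro ⟨v1, v2⟩ hv
      simp only [mem_filter] at hv
      obtain ⟨-, -, hv1⟩ := hv
      have hv' : v1 - 1 + 1 = v1 := by omega
      show ((v1:ℕ) - 1 + 1, v2) = (v1, v2)
      rw [hv']
    case right =>
      rintro ⟨w1, w2⟩ hw
      rfl

lemma hookLen_top {m : ℕ} {a : Fin (m+1) → ℕ} (h2 : ∀ i : Fin (m+1), a i ≤ 2 * (i : ℕ) + 1)
    (c : ℕ) (hc : c + (m + 1) < a (Fin.last m)) :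
    hookLen (cellsOf (m+1) a) (0, c) =
      (a (Fin.last m) - (m + 1) - c) +
        (univ.filter fun i : Fin m => c + (i : ℕ) + 1 < a i.castSucc).card := by
  have hlast : extSeq (m+1) a m = a (Fin.last m) := by
    rw [extSeq_eq a m (by omega)]; rfl
  unfold hookLen
  congr 1
  · -- arm
    have key : ((cellsOf (m+1) a).filter fun v => v.1 = ((0:ℕ), c).1 ∧ ((0:ℕ), c).2 ≤ v.2).card
        = (Ico c (a (Fin.last m) - (m + 1))).card := by
      refine Finset.card_bij' (fun v _ => v.2) (fun t _ => ((0 : ℕ), t)) ?hi ?hj ?left ?right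
      case hi =>
        rintro ⟨v1, v2⟩ hv
        simp only [mem_filter] at hv
        obtain ⟨hvc, hv1, hv2⟩ := hv
        subst hv1
        rw [mem_cellsOf h2] at hvc
        obtain ⟨-, hlt⟩ := hvc
        simp only [Nat.sub_zero, Nat.add_sub_cancel] at hlt
        rw [hlast] at hlt
        simp only [mem_Ico]
        exact ⟨hv2, by omega⟩
      case hj =>
        intro t ht
        rw [mem_Ico] at ht
        simp only [mem_filter]
        refine ⟨?_, trivial, ht.1⟩
        rw [mem_cellsOf h2]
        simp only [Nat.sub_zero, Nat.add_sub_cancel]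
        rw [hlast]
        exact ⟨by omega, by omega⟩
      case left =>
        rintro ⟨v1, v2⟩ hv
        simp only [mem_filter] at hv
        obtain ⟨-, hv1, -⟩ := hv
        subst hv1
        rfl
      case right =>
        intro t ht
        rfl
    rw [key, Nat.card_Ico]
  · -- leg
    refine Finset.card_bij' (fun v hv => (⟨m - v.1, by
        simp only [mem_filter] at hv
        have h1 := (mem_cellsOf h2).mp hv.1
        have h2' : (0:ℕ) < v.1 := hv.2.2
        omega⟩ : Fin m))
      (fun i _ => ((m - (i : ℕ), c) : ℕ × ℕ)) ?hi ?hj ?left ?right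
    case hi =>
      rintro ⟨v1, v2⟩ hv
      simp only [mem_filter] at hv
      obtain ⟨hvc, hv2, hv1⟩ := hv
      subst hv2
      rw [mem_cellsOf h2] at hvc
      obtain ⟨hva, hvb⟩ := hvc
      simp only at hva hvb hv1 ⊢
      simp only [mem_filter, mem_univ, true_and]
      have hk : m + 1 - 1 - v1 = m - v1 := by omega
      rw [hk, extSeq_eq a (m - v1) (by omega)] at hvb
      have heq : a (Fin.castSucc ⟨m - v1, by omega⟩) = a ⟨m - v1, by omega⟩ :=
        congrArg a (Fin.ext rfl)
      rw [heq]
      omega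
    case hj =>
      intro i hi
      simp only [mem_filter, mem_univ, true_and] at hi
      simp only [mem_filter]
      refine ⟨?_, trivial, by omega⟩
      rw [mem_cellsOf h2]
      refine ⟨by omega, ?_⟩
      simp only
      have hk : m + 1 - 1 - (m - (i : ℕ)) = (i : ℕ) := by omega
      rw [hk, extSeq_eq a (i : ℕ) (by omega)]
      have heq : a (Fin.castSucc i) = a ⟨(i : ℕ), by omega⟩ := congrArg a (Fin.ext rfl)
      rw [heq] at hi
      omega
    case left =>
      rintro ⟨v1, v2⟩ hv
      simp only [mem_filter] at hv
      have h1 := (mem_cellsOf h2).mp hv.1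
      have hv2 : v2 = c := hv.2.1
      have hv1 : (0:ℕ) < v1 := hv.2.2
      simp only at h1
      simp only [Prod.mk.injEq]
      exact ⟨by omega, hv2.symm⟩
    case right =>
      intro i hi
      apply Fin.ext
      simp only [Fin.val_mk]
      omega
lemma rowProd (m : ℕ) (a : Fin (m+1) → ℕ) (ha : StrictMono a) (h1 : ∀ i, 1 ≤ a i) :
    (∏ c ∈ range (a (Fin.last m) - (m+1)),
      ((a (Fin.last m) - (m+1) - c) +
        (univ.filter fun i : Fin m => c + (i:ℕ) + 1 < a i.castSucc).card)) *
    ∏ i : Fin m, (a (Fin.last m) - a i.castSucc) = (a (Fin.last m) - 1).factorial := by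
  have hcs : StrictMono (fun i : Fin m => a i.castSucc) := fun i j h =>
    ha (by rwa [Fin.castSucc_lt_castSucc_iff])
  set A := a (Fin.last m) with hAdef
  have hA : m + 1 ≤ A := by
    have := strictMono_gap ha m ⟨0, by omega⟩ (Fin.last m) (by simp)
    have := h1 (⟨0, by omega⟩ : Fin (m+1))
    omega
  set lam := A - (m+1) with hlam
  set B := A - 1 with hB
  set g : ℕ → ℕ := fun c =>
    c + (univ.filter fun i : Fin m => a i.castSucc ≤ c + (i:ℕ) + 1).card with hg
  -- hook term equals B - g c
  have hterm : ∀ c ∈ range lam,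
      (lam - c) + (univ.filter fun i : Fin m => c + (i:ℕ) + 1 < a i.castSucc).card
        = B - g c := by
    intro c hc
    rw [mem_range] at hc
    have h := Finset.card_filter_add_card_filter_not
      (s := (univ : Finset (Fin m))) (p := fun i => c + (i:ℕ) + 1 < a i.castSucc)
    simp only [not_lt, Finset.card_univ, Fintype.card_fin] at h
    simp only [hg]
    omega
  have gmono : StrictMono g := by
    intro c c' hcc
    have : (univ.filter fun i : Fin m => a i.castSucc ≤ c + (i:ℕ) + 1).card ≤
        (univ.filter fun i : Fin m => a i.castSucc ≤ c' + (i:ℕ) + 1).card := by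
      apply card_le_card
      intro i hi
      simp only [mem_filter, mem_univ, true_and] at hi ⊢
      omega
    simp only [hg]
    omega
  have gsm : ∀ c, c < lam → g c < B := by
    intro c hc
    have hcard : (univ.filter fun i : Fin m => a i.castSucc ≤ c + (i:ℕ) + 1).card ≤ m := by
      calc _ ≤ (univ : Finset (Fin m)).card := card_filter_le _ _
        _ = m := by simp
    simp only [hg]; omega
  have gnot : ∀ c, c < lam → ∀ j : Fin m, g c ≠ a j.castSucc - 1 := by
    intro c hc j
    have hj1 : 1 ≤ a j.castSucc := h1 _
    by_cases hcase : a j.castSucc ≤ c + (j:ℕ) + 1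
    · have hsub : Iic j ⊆ univ.filter fun i : Fin m => a i.castSucc ≤ c + (i:ℕ) + 1 := by
        intro i hi
        rw [mem_Iic] at hi
        have hgap := strictMono_gap hcs ((j:ℕ) - (i:ℕ)) i j (by omega)
        simp only [mem_filter, mem_univ, true_and]
        omega
      have hcard := card_le_card hsub
      rw [Fin.card_Iic] at hcard
      simp only [hg]
      omega
    · have hsub : (univ.filter fun i : Fin m => a i.castSucc ≤ c + (i:ℕ) + 1) ⊆ Iio j := by
        intro i hi
        simp only [mem_filter, mem_univ, true_and] at hi
        rw [mem_Iio]
        by_contra hij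
        push_neg at hij
        have hgap := strictMono_gap hcs ((i:ℕ) - (j:ℕ)) j i (by omega)
        omega
      have hcard := card_le_card hsub
      rw [Fin.card_Iio] at hcard
      simp only [hg]
      omega
  set T : Finset ℕ := univ.image (fun i : Fin m => a i.castSucc - 1) with hT
  have hinj : Function.Injective (fun i : Fin m => a i.castSucc - 1) := by
    intro i i' h
    simp only at h
    have := h1 (Fin.castSucc i); have := h1 (Fin.castSucc i')
    have : a i.castSucc = a i'.castSucc := by omega
    exact hcs.injective this
  have hTcard : T.card = m := by
    rw [hT, card_image_of_injective _ hinj, Finset.card_univ, Fintype.card_fin]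
  have hTsub : T ⊆ range B := by
    intro t ht
    rw [hT, mem_image] at ht
    obtain ⟨j, _, rfl⟩ := ht
    have := ha (Fin.castSucc_lt_last j)
    rw [mem_range]
    have := h1 (Fin.castSucc j)
    omega
  have hSsub : (range lam).image g ⊆ range B \ T := by
    intro t ht
    rw [mem_image] at ht
    obtain ⟨c, hc, rfl⟩ := ht
    rw [mem_range] at hc
    rw [mem_sdiff, mem_range]
    refine ⟨gsm c hc, ?_⟩
    rw [hT, mem_image]
    rintro ⟨j, -, hj⟩
    exact gnot c hc j hj.symm
  have hS : (range lam).image g = range B \ T := by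
    apply eq_of_subset_of_card_le hSsub
    rw [card_sdiff_of_subset hTsub, card_range, hTcard,
      card_image_of_injective _ gmono.injective, card_range]
    omega
  calc (∏ c ∈ range lam,
      ((lam - c) + (univ.filter fun i : Fin m => c + (i:ℕ) + 1 < a i.castSucc).card)) *
      ∏ i : Fin m, (A - a i.castSucc)
      = (∏ c ∈ range lam, (B - g c)) * ∏ t ∈ T, (B - t) := by
        rw [prod_congr rfl hterm]
        congr 1
        rw [hT, prod_image (fun i _ j _ h => hinj h)]
        apply prod_congr rfl
        intro i _
        have := h1 (Fin.castSucc i)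
        omega
    _ = (∏ t ∈ (range lam).image g, (B - t)) * ∏ t ∈ T, (B - t) := by
        rw [prod_image (fun i _ j _ h => gmono.injective h)]
    _ = ∏ t ∈ range B, (B - t) := by
        rw [hS]
        exact prod_sdiff hTsub
    _ = ∏ t ∈ range B, (t + 1) := by
        rw [← prod_range_reflect (fun t => B - t) B]
        apply prod_congr rfl
        intro t ht
        rw [mem_range] at ht
        omega
    _ = B.factorial := Finset.prod_range_add_one_eq_factorial B

lemma prod_Ioi_castSucc {M : Type*} [CommMonoid M] {m : ℕ} (i : Fin m) (g : Fin (m+1) → M) :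
    ∏ j ∈ Ioi i.castSucc, g j = (∏ j ∈ Ioi i, g j.castSucc) * g (Fin.last m) := by
  have hset : Ioi i.castSucc = insert (Fin.last m) ((Ioi i).image Fin.castSucc) := by
    ext j
    simp only [mem_Ioi, mem_insert, mem_image]
    constructor
    · intro hj
      by_cases hl : j = Fin.last m
      · exact Or.inl hl
      · obtain ⟨k, rfl⟩ := Fin.exists_castSucc_eq.mpr hl
        exact Or.inr ⟨k, by rwa [Fin.castSucc_lt_castSucc_iff] at hj, rfl⟩
    · rintro (rfl | ⟨k, hk, rfl⟩)
      · exact Fin.castSucc_lt_last i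
      · rwa [Fin.castSucc_lt_castSucc_iff]
  rw [hset, prod_insert, prod_image]
  · rw [mul_comm]
  · intro x _ y _ h
    exact Fin.castSucc_injective _ h
  · simp only [mem_image, mem_Ioi]
    rintro ⟨k, -, hk⟩
    exact absurd hk (Fin.ne_last_of_lt (Fin.castSucc_lt_last k)).elim
lemma keyNat : ∀ (n : ℕ) (a : Fin n → ℕ), StrictMono a → (∀ i, 1 ≤ a i) →
    (∀ i : Fin n, a i ≤ 2 * (i : ℕ) + 1) →
    hookProd (cellsOf n a) * ∏ i : Fin n, ∏ j ∈ Ioi i, (a j - a i)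
      = ∏ i : Fin n, (a i - 1).factorial := by
  intro n
  induction n with
  | zero =>
    intro a _ _ _
    simp [hookProd, cellsOf]
  | succ m ih =>
    intro a ha h1 h2
    have ha's : StrictMono (fun i : Fin m => a i.castSucc) := fun i j h =>
      ha (by rwa [Fin.castSucc_lt_castSucc_iff])
    have IH := ih (fun i => a i.castSucc) ha's (fun i => h1 _) (h2' h2)
    have hA : m + 1 ≤ a (Fin.last m) := by
      have := strictMono_gap ha m ⟨0, by omega⟩ (Fin.last m) (by simp)
      have := h1 (⟨0, by omega⟩ : Fin (m+1))
      omega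
    -- split the hook product into top row and the rest
    have hsplit : hookProd (cellsOf (m+1) a)
        = (∏ c ∈ range (a (Fin.last m) - (m+1)), hookLen (cellsOf (m+1) a) (0, c)) *
          hookProd (cellsOf m (fun i => a i.castSucc)) := by
      rw [hookProd, ← prod_filter_mul_prod_filter_not (cellsOf (m+1) a) (fun u => u.1 = 0)]
      congr 1
      · refine prod_bij' (fun u _ => u.2) (fun c _ => ((0:ℕ), c)) ?hi ?hj ?li ?ri ?hval
        case hi =>
          rintro ⟨u1, u2⟩ hu
          simp only [mem_filter] at hu
          obtain ⟨huc, hu1⟩ := hu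
          subst hu1
          rw [mem_cellsOf h2] at huc
          obtain ⟨-, hlt⟩ := huc
          simp only [Nat.sub_zero, Nat.add_sub_cancel] at hlt
          rw [extSeq_eq a m (by omega)] at hlt
          have : a (⟨m, by omega⟩ : Fin (m+1)) = a (Fin.last m) := rfl
          rw [this] at hlt
          simp only [mem_range]
          omega
        case hj =>
          intro c hc
          rw [mem_range] at hc
          simp only [mem_filter]
          refine ⟨?_, trivial⟩
          rw [mem_cellsOf h2]
          refine ⟨by omega, ?_⟩
          simp only [Nat.sub_zero, Nat.add_sub_cancel]
          rw [extSeq_eq a m (by omega)]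
          have : a (⟨m, by omega⟩ : Fin (m+1)) = a (Fin.last m) := rfl
          rw [this]
          omega
        case li =>
          rintro ⟨u1, u2⟩ hu
          simp only [mem_filter] at hu
          obtain ⟨-, hu1⟩ := hu
          subst hu1
          rfl
        case ri =>
          intro c hc
          rfl
        case hval =>
          rintro ⟨u1, u2⟩ hu
          simp only [mem_filter] at hu
          obtain ⟨-, hu1⟩ := hu
          subst hu1
          rfl
      · unfold hookProd
        refine prod_bij' (fun u _ => ((u.1 - 1 : ℕ), u.2)) (fun w _ => ((w.1 + 1 : ℕ), w.2))
          ?hi ?hj ?li ?ri ?hval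
        case hi =>
          rintro ⟨u1, u2⟩ hu
          simp only [mem_filter] at hu
          obtain ⟨huc, hu1⟩ := hu
          have : u1 = (u1 - 1) + 1 := by omega
          rw [this] at huc
          rw [shift_mem h2] at huc
          exact huc
        case hj =>
          rintro ⟨w1, w2⟩ hw
          simp only [mem_filter]
          rw [← shift_mem h2 w1 w2] at hw
          exact ⟨hw, by omega⟩
        case li =>
          rintro ⟨u1, u2⟩ hu
          simp only [mem_filter] at hu
          have : u1 ≠ 0 := hu.2
          show ((u1:ℕ) - 1 + 1, u2) = (u1, u2)
          have h' : u1 - 1 + 1 = u1 := by omega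
          rw [h']
        case ri =>
          rintro ⟨w1, w2⟩ hw
          rfl
        case hval =>
          rintro ⟨u1, u2⟩ hu
          simp only [mem_filter] at hu
          have hne : u1 ≠ 0 := hu.2
          have h' : u1 = (u1 - 1) + 1 := by omega
          show hookLen (cellsOf (m+1) a) (u1, u2) =
            hookLen (cellsOf m fun i => a i.castSucc) (u1 - 1, u2)
          conv_lhs => rw [h']
          exact hookLen_shift h2 (u1 - 1) u2
    have htop : ∀ c ∈ range (a (Fin.last m) - (m+1)),
        hookLen (cellsOf (m+1) a) (0, c) =
          (a (Fin.last m) - (m + 1) - c) +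
            (univ.filter fun i : Fin m => c + (i : ℕ) + 1 < a i.castSucc).card := by
      intro c hc
      rw [mem_range] at hc
      exact hookLen_top h2 c (by omega)
    have hrow := rowProd m a ha h1
    have hP : ∏ i : Fin (m+1), ∏ j ∈ Ioi i, (a j - a i)
        = (∏ i : Fin m, ∏ j ∈ Ioi i, (a j.castSucc - a i.castSucc)) *
          ∏ i : Fin m, (a (Fin.last m) - a i.castSucc) := by
      rw [Fin.prod_univ_castSucc (f := fun i => ∏ j ∈ Ioi i, (a j - a i))]
      have hlast : Ioi (Fin.last m) = (∅ : Finset (Fin (m+1))) := by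
        ext j
        simp only [mem_Ioi, notMem_empty, iff_false, not_lt]
        exact Fin.le_last j
      rw [hlast, prod_empty, mul_one]
      rw [← prod_mul_distrib]
      apply prod_congr rfl
      intro i _
      rw [prod_Ioi_castSucc i (fun j => a j - a i.castSucc)]
    rw [hsplit, hP, Fin.prod_univ_castSucc (f := fun i => (a i - 1).factorial),
      prod_congr rfl htop]
    calc (∏ c ∈ range (a (Fin.last m) - (m+1)),
          ((a (Fin.last m) - (m + 1) - c) +
            (univ.filter fun i : Fin m => c + (i : ℕ) + 1 < a i.castSucc).card)) *
          hookProd (cellsOf m fun i => a i.castSucc) *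
          ((∏ i : Fin m, ∏ j ∈ Ioi i, (a j.castSucc - a i.castSucc)) *
            ∏ i : Fin m, (a (Fin.last m) - a i.castSucc))
        = (hookProd (cellsOf m fun i => a i.castSucc) *
            ∏ i : Fin m, ∏ j ∈ Ioi i, (a j.castSucc - a i.castSucc)) *
          ((∏ c ∈ range (a (Fin.last m) - (m+1)),
            ((a (Fin.last m) - (m + 1) - c) +
              (univ.filter fun i : Fin m => c + (i : ℕ) + 1 < a i.castSucc).card)) *
            ∏ i : Fin m, (a (Fin.last m) - a i.castSucc)) := by ring
      _ = (∏ i : Fin m, (a i.castSucc - 1).factorial) * (a (Fin.last m) - 1).factorial := by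
          rw [IH, hrow]
lemma det_side (n : ℕ) (a : Fin n → ℕ) (ha : StrictMono a) (h1 : ∀ i, 1 ≤ a i) :
    Matrix.det (Matrix.of fun i j : Fin n =>
      if (j : ℕ) + 1 ≤ a i then (1 : ℚ) / ((a i - ((j : ℕ) + 1)).factorial) else 0)
    = (∏ i : Fin n, (1:ℚ) / ((a i - 1).factorial)) *
      ∏ i : Fin n, ∏ j ∈ Ioi i, ((a j : ℚ) - (a i : ℚ)) := by
  classical
  set p : Fin n → Polynomial ℚ :=
    fun j => ∏ t ∈ range (j:ℕ), (Polynomial.X - Polynomial.C ((t:ℚ)+1)) with hp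
  have hmon : ∀ j, (p j).Monic := fun j =>
    Polynomial.monic_prod_of_monic _ _ (fun t _ => Polynomial.monic_X_sub_C _)
  have hdeg : ∀ j : Fin n, (p j).natDegree = (j:ℕ) := by
    intro j
    rw [hp]
    rw [Polynomial.natDegree_prod_of_monic _ _ (fun t _ => Polynomial.monic_X_sub_C _)]
    simp only [Polynomial.natDegree_X_sub_C]
    simp
  have heval : ∀ (i j : Fin n), (p j).eval ((a i : ℚ)) =
      ∏ t ∈ range (j:ℕ), ((a i : ℚ) - ((t:ℚ)+1)) := by
    intro i j
    rw [hp, Polynomial.eval_prod]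
    apply prod_congr rfl
    intro t _
    simp
  have hentry : ∀ (i j : Fin n),
      (if (j : ℕ) + 1 ≤ a i then (1 : ℚ) / ((a i - ((j : ℕ) + 1)).factorial) else 0)
        = ((1:ℚ) / ((a i - 1).factorial)) * (p j).eval ((a i : ℚ)) := by
    intro i j
    rw [heval]
    by_cases hle : (j:ℕ) + 1 ≤ a i
    · rw [if_pos hle]
      have hprod : ∏ t ∈ range (j:ℕ), ((a i : ℚ) - ((t:ℚ)+1))
          = (((a i - 1).descFactorial (j:ℕ) : ℕ) : ℚ) := by
        rw [Nat.descFactorial_eq_prod_range, Nat.cast_prod]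
        apply prod_congr rfl
        intro t ht
        rw [mem_range] at ht
        have h1' : 1 ≤ a i := h1 i
        have h2' : t ≤ a i - 1 := by omega
        rw [Nat.cast_sub h2', Nat.cast_sub (by omega : 1 ≤ a i)]
        push_cast
        ring
      rw [hprod]
      have hnat : ((a i - 1) - (j:ℕ)).factorial * (a i - 1).descFactorial (j:ℕ)
          = (a i - 1).factorial := Nat.factorial_mul_descFactorial (by omega)
      have he : a i - ((j:ℕ) + 1) = a i - 1 - (j:ℕ) := by omega
      rw [he]
      have hne1 : (((a i - 1 - (j:ℕ)).factorial : ℕ) : ℚ) ≠ 0 :=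
        Nat.cast_ne_zero.mpr (Nat.factorial_ne_zero _)
      have hne2 : (((a i - 1).factorial : ℕ) : ℚ) ≠ 0 :=
        Nat.cast_ne_zero.mpr (Nat.factorial_ne_zero _)
      field_simp
      exact_mod_cast hnat.symm
    · rw [if_neg hle]
      symm
      have hz : ∏ t ∈ range (j:ℕ), ((a i : ℚ) - ((t:ℚ)+1)) = 0 := by
        apply Finset.prod_eq_zero (i := a i - 1)
        · rw [mem_range]
          have := h1 i
          omega
        · have h1' : 1 ≤ a i := h1 i
          rw [Nat.cast_sub h1']
          push_cast
          ring
      rw [hz, mul_zero]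
  have hmat : (Matrix.of fun i j : Fin n =>
      if (j : ℕ) + 1 ≤ a i then (1 : ℚ) / ((a i - ((j : ℕ) + 1)).factorial) else 0)
      = Matrix.of (fun i j : Fin n =>
        ((1:ℚ) / ((a i - 1).factorial)) * (p j).eval ((a i : ℚ))) := by
    ext i j
    exact hentry i j
  rw [hmat]
  rw [show (Matrix.of fun i j : Fin n => ((1:ℚ) / ((a i - 1).factorial)) * (p j).eval ((a i : ℚ)))
      = Matrix.of (fun i j : Fin n => ((1:ℚ) / ((a i - 1).factorial)) *
          (Matrix.of (fun i' j' : Fin n => (p j').eval ((a i' : ℚ)))) i j) from rfl,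
    Matrix.det_mul_column (fun i => (1:ℚ) / ((a i - 1).factorial))
      (Matrix.of (fun i j : Fin n => (p j).eval ((a i : ℚ))))]
  congr 1
  rw [← Matrix.det_eval_matrixOfPolynomials_eq_det_vandermonde (fun i => (a i : ℚ)) p hdeg hmon]
  rw [Matrix.det_vandermonde]

/-- For `a₁ < ⋯ < aₙ` positive with `aᵢ ≤ 2i - 1`, `1/H_{Y(a)}` equals the `n × n`
determinant with `(i,j)` entry `1/(aᵢ - j)!` (interpreted as `0` when `aᵢ - j < 0`). -/
theorem one_div_hookProd_eq_det (n : ℕ) (a : Fin n → ℕ) (ha : StrictMono a)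
    (h1 : ∀ i, 1 ≤ a i) (h2 : ∀ i : Fin n, a i ≤ 2 * (i : ℕ) + 1) :
    (1 : ℚ) / hookProd (cellsOf n a) =
    Matrix.det (Matrix.of fun i j : Fin n =>
      if (j : ℕ) + 1 ≤ a i then (1 : ℚ) / ((a i - ((j : ℕ) + 1)).factorial) else 0) := by
  have key := keyNat n a ha h1 h2
  rw [det_side n a ha h1]
  have hHpos : 0 < hookProd (cellsOf n a) := by
    rw [hookProd]
    apply prod_pos
    intro u hu
    have : 0 < ((cellsOf n a).filter fun v => v.1 = u.1 ∧ u.2 ≤ v.2).card := by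
      apply card_pos.mpr
      exact ⟨u, mem_filter.mpr ⟨hu, rfl, le_refl _⟩⟩
    unfold hookLen
    omega
  have hPcast : ((∏ i : Fin n, ∏ j ∈ Ioi i, (a j - a i) : ℕ) : ℚ)
      = ∏ i : Fin n, ∏ j ∈ Ioi i, ((a j : ℚ) - (a i : ℚ)) := by
    rw [Nat.cast_prod]
    apply prod_congr rfl
    intro i _
    rw [Nat.cast_prod]
    apply prod_congr rfl
    intro j hj
    rw [mem_Ioi] at hj
    exact Nat.cast_sub (le_of_lt (ha hj))
  have hkey : (hookProd (cellsOf n a) : ℚ) * ∏ i : Fin n, ∏ j ∈ Ioi i, ((a j:ℚ) - (a i:ℚ))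
      = ∏ i : Fin n, (((a i - 1).factorial : ℕ) : ℚ) := by
    rw [← hPcast, ← Nat.cast_mul, key, Nat.cast_prod]
  have hFinv : (∏ i : Fin n, (1:ℚ) / ((a i - 1).factorial))
      = 1 / ∏ i : Fin n, (((a i - 1).factorial : ℕ) : ℚ) := by
    rw [one_div, ← Finset.prod_inv_distrib]
    apply prod_congr rfl
    intro i _
    rw [one_div]
  rw [hFinv]
  have hHne : (hookProd (cellsOf n a) : ℚ) ≠ 0 := by
    exact_mod_cast Nat.pos_iff_ne_zero.mp hHpos
  have hFne : (∏ i : Fin n, (((a i - 1).factorial : ℕ) : ℚ)) ≠ 0 := by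
    apply prod_ne_zero_iff.mpr
    intro i _
    exact Nat.cast_ne_zero.mpr (Nat.factorial_ne_zero _)
  rw [eq_comm, mul_comm, ← div_eq_mul_one_div, div_eq_div_iff hFne hHne]
  rw [← hkey]
  ring
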